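/- If a polynomial f ∈ ℝ[x,u,v] vanishes on B × U × V, where B × U ⊆ ℝⁿ × ℝᵖ has nonempty interior and V = {v ∈ ℝᵐ : vᵀv = 1} is the unit sphere, and if the ideal J = (1 - vᵀv) ⊆ ℝ[v] satisfies I(V) = J, then f belongs to the ideal generated by 1 - vᵀv in ℝ[x,u,v]. -/

import Mathlib

open MvPolynomial


lemma eval_zero_of_interior {k : Type*} [Fintype k]
    (S : Set (k → ℝ)) (hS : (interior S).Nonempty)
    (g : MvPolynomial k ℝ) (hg : ∀ w ∈ S, eval w g = 0) : g = 0 := by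
  obtain ⟨z₀, hz₀⟩ := hS
  have han : AnalyticOnNhd ℝ (fun w : k → ℝ ↦ eval w g) Set.univ :=
    AnalyticOnNhd.eval_continuousLinearMap (ContinuousLinearMap.id ℝ (k → ℝ)) g
  have hev : (fun w : k → ℝ ↦ eval w g) =ᶠ[nhds z₀] 0 := by
    filter_upwards [isOpen_interior.mem_nhds hz₀] with w hw
    exact hg w (interior_subset hw)
  have hzero := han.eqOn_zero_of_preconnected_of_eventuallyEq_zero
    isPreconnected_univ (Set.mem_univ z₀) hev
  apply MvPolynomial.funext
  intro x
  simpa using hzero (Set.mem_univ x)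


/-- If a polynomial `f ∈ ℝ[x,u,v]` vanishes on `B × U × V`, where
`B × U ⊆ ℝⁿ × ℝᵖ` has nonempty interior and `V` is the unit sphere of `ℝᵐ`,
and if every polynomial of `ℝ[v]` vanishing on `V` is a multiple of
`1 - vᵀv`, then `f = (vᵀv - 1)·h` for some `h ∈ ℝ[x,u,v]`. -/
theorem vanishing_poly_mem_sphere_ideal
    {n p m : ℕ}
    (B : Set (Fin n → ℝ)) (U : Set (Fin p → ℝ))
    (hint : (interior (B ×ˢ U)).Nonempty)
    (hideal : ∀ g : MvPolynomial (Fin m) ℝ,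
      (∀ v : Fin m → ℝ, (∑ i, v i ^ 2) = 1 → eval v g = 0) →
      (1 - ∑ i, X i ^ 2) ∣ g)
    (f : MvPolynomial (Fin n ⊕ Fin p ⊕ Fin m) ℝ)
    (hf : ∀ x ∈ B, ∀ u ∈ U, ∀ v : Fin m → ℝ, (∑ i, v i ^ 2) = 1 →
      eval (Sum.elim x (Sum.elim u v)) f = 0) :
    ∃ h : MvPolynomial (Fin n ⊕ Fin p ⊕ Fin m) ℝ,
      f = ((∑ i, X (Sum.inr (Sum.inr i)) ^ 2) - 1) * h := by
  classical
  set e : (Fin n ⊕ (Fin p ⊕ Fin m)) ≃ ((Fin n ⊕ Fin p) ⊕ Fin m) :=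
    (Equiv.sumAssoc (Fin n) (Fin p) (Fin m)).symm with he
  set F : MvPolynomial (Fin n ⊕ Fin p) (MvPolynomial (Fin m) ℝ) :=
    sumToIter ℝ (Fin n ⊕ Fin p) (Fin m) (rename e f) with hF
  -- key evaluation identity
  have key : ∀ (x : Fin n → ℝ) (u : Fin p → ℝ) (v : Fin m → ℝ),
      eval (Sum.elim x u) (MvPolynomial.map (eval v) F)
        = eval (Sum.elim x (Sum.elim u v)) f := by
    intro x u v
    have hhom : ((eval (Sum.elim x u)).comp ((MvPolynomial.map (eval v)).comp
        ((sumToIter ℝ (Fin n ⊕ Fin p) (Fin m)).comp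
          (rename (R := ℝ) e).toRingHom)))
        = eval (Sum.elim x (Sum.elim u v)) := by
      apply MvPolynomial.ringHom_ext
      · intro a
        simp [sumToIter_C]
      · rintro (i | j | l) <;>
          simp [he, sumToIter_Xl, sumToIter_Xr]
    exact RingHom.congr_fun hhom f
  -- for every v on the sphere, the image of F under eval v vanishes
  have hmap : ∀ v : Fin m → ℝ, (∑ i, v i ^ 2) = 1 →
      MvPolynomial.map (eval v) F = 0 := by
    intro v hv
    set T : Set ((Fin n ⊕ Fin p) → ℝ) :=
      (Homeomorph.sumArrowHomeomorphProdArrow (ι := Fin n) (ι' := Fin p) (X := ℝ)) ⁻¹' (B ×ˢ U)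
      with hT
    have hTint : (interior T).Nonempty := by
      rw [hT, ← Homeomorph.preimage_interior]
      exact hint.preimage (Homeomorph.surjective _)
    apply eval_zero_of_interior T hTint
    intro w hw
    have hw' : (fun i => w (Sum.inl i)) ∈ B ∧ (fun j => w (Sum.inr j)) ∈ U := by
      simp [hT, Homeomorph.sumArrowHomeomorphProdArrow,
        Equiv.sumArrowEquivProdArrow, Set.mem_prod] at hw
      exact hw
    have hwe : Sum.elim (fun i => w (Sum.inl i)) (fun j => w (Sum.inr j)) = w := by
      funext s; cases s <;> rfl
    have := key (fun i => w (Sum.inl i)) (fun j => w (Sum.inr j)) v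
    rw [hwe] at this
    rw [this]
    exact hf _ hw'.1 _ hw'.2 v hv
  -- coefficientwise divisibility
  have hdvd : C (σ := Fin n ⊕ Fin p) (1 - ∑ i : Fin m, (X i : MvPolynomial (Fin m) ℝ) ^ 2) ∣ F := by
    rw [C_dvd_iff_dvd_coeff]
    intro d
    apply hideal
    intro v hv
    have h0 := hmap v hv
    have : coeff d (MvPolynomial.map (eval v) F) = 0 := by rw [h0]; simp
    rwa [coeff_map] at this
  obtain ⟨H, hH⟩ := hdvd
  -- pull back along the isomorphisms
  have hrec : f = rename e.symm (iterToSum ℝ (Fin n ⊕ Fin p) (Fin m) F) := by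
    have h1 : iterToSum ℝ (Fin n ⊕ Fin p) (Fin m) F = rename e f := by
      rw [hF]
      exact RingHom.congr_fun (show (iterToSum ℝ (Fin n ⊕ Fin p) (Fin m)).comp
          (sumToIter ℝ (Fin n ⊕ Fin p) (Fin m)) = RingHom.id _ from
        MvPolynomial.ringHom_ext (fun a => by simp [sumToIter_C, iterToSum_C_C])
          (fun i => by cases i <;> simp [sumToIter_Xl, sumToIter_Xr, iterToSum_X, iterToSum_C_X]))
        (rename e f)
    rw [h1, rename_rename]
    simp
  refine ⟨-(rename e.symm (iterToSum ℝ (Fin n ⊕ Fin p) (Fin m) H)), ?_⟩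
  rw [hrec, hH, map_mul, map_mul]
  have hD : rename (R := ℝ) e.symm (iterToSum ℝ (Fin n ⊕ Fin p) (Fin m)
      (C (1 - ∑ i : Fin m, (X i : MvPolynomial (Fin m) ℝ) ^ 2)))
      = 1 - ∑ i : Fin m, (X (Sum.inr (Sum.inr i)) : MvPolynomial (Fin n ⊕ Fin p ⊕ Fin m) ℝ) ^ 2 := by
    simp [map_sub, map_one, map_sum, map_pow, iterToSum_C_X, rename_X, he]
  rw [hD]
  ring
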